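/- Let P be a finitely generated abelian group, let K be a subgroup of P, and let F be a finite subset of P disjoint from K. Then there exists a subgroup R of P of finite index such that K ≤ R, R ∩ F = ∅, and K is a direct factor of R, i.e. there exists a subgroup L of P with L ≤ R, K ⊓ L = ⊥, and K ⊔ L = R. -/

import Mathlib

/-- In a finitely generated abelian group `P`, given a subgroup `K` and a finite set `F`
disjoint from `K`, there is a finite-index subgroup `R` of `P` containing `K`, avoiding `F`,
and in which `K` is a direct factor. -/
theorem stmt_3 {P : Type*} [CommGroup P] [Group.FG P] (K : Subgroup P) (F : Finset P)
    (hF : ∀ f ∈ F, f ∉ K) :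
    ∃ R : Subgroup P, R.FiniteIndex ∧ K ≤ R ∧ (∀ f ∈ F, f ∉ R) ∧
      ∃ L : Subgroup P, L ≤ R ∧ K ⊓ L = ⊥ ∧ K ⊔ L = R := by
  classical
  set Q := P ⧸ K with hQ
  set π : P →* Q := QuotientGroup.mk' K with hπdef
  have hπ : Function.Surjective π := QuotientGroup.mk'_surjective K
  have hπ1 : ∀ x : P, π x = 1 ↔ x ∈ K := fun x => QuotientGroup.eq_one_iff x
  obtain ⟨n, ι, fι, p, hp, ex, ⟨e⟩⟩ :=
    AddCommGroup.equiv_free_prod_directSum_zmod (Additive Q)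
  haveI : Fintype ι := fι
  set T := DirectSum ι (fun i => ZMod (p i ^ ex i)) with hT
  haveI : ∀ i, NeZero (p i ^ ex i) := fun i => ⟨pow_ne_zero _ (hp i).pos.ne'⟩
  haveI : Finite T := Finite.of_equiv _ DFinsupp.equivFunOnFintype.symm
  -- choose the modulus m
  set m : ℕ := 1 + ∑ f ∈ F, ∑ i, ((e (Additive.ofMul (π f))).1 i).natAbs with hm
  haveI : NeZero m := ⟨by simp [hm]⟩
  have hmpos : 0 < m := Nat.pos_of_ne_zero (NeZero.ne m)
  have hmbig : ∀ f ∈ F, ∀ i, ((e (Additive.ofMul (π f))).1 i).natAbs < m := by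
    intro f hf i
    have h1 : ((e (Additive.ofMul (π f))).1 i).natAbs ≤
        ∑ j, ((e (Additive.ofMul (π f))).1 j).natAbs :=
      Finset.single_le_sum (f := fun j => ((e (Additive.ofMul (π f))).1 j).natAbs)
        (fun _ _ => Nat.zero_le _) (Finset.mem_univ i)
    have h2 : ∑ j, ((e (Additive.ofMul (π f))).1 j).natAbs ≤
        ∑ g ∈ F, ∑ j, ((e (Additive.ofMul (π g))).1 j).natAbs :=
      Finset.single_le_sum (f := fun g => ∑ j, ((e (Additive.ofMul (π g))).1 j).natAbs)
        (fun _ _ => Nat.zero_le _) hf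
    omega
  -- reduction mod m on the free part
  set red : (Fin n →₀ ℤ) →+ (Fin n → ZMod m) :=
    { toFun := fun v i => ((v i : ℤ) : ZMod m)
      map_zero' := by funext i; simp
      map_add' := by intro v w; funext i; simp } with hred
  set φ : Additive Q →+ (Fin n → ZMod m) × T :=
    (red.prodMap (AddMonoidHom.id T)).comp e.toAddMonoidHom with hφ
  -- the key description of the kernel of φ
  have hker : ∀ a : Additive Q, φ a = 0 ↔ ∃ v : Fin n →₀ ℤ, e a = ((m : ℤ) • v, 0) := by
    intro a
    constructor
    · intro h
      have h1 : (∀ i, (((e a).1 i : ℤ) : ZMod m) = 0) ∧ (e a).2 = 0 := by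
        have h1 := congrArg Prod.fst h
        have h2 := congrArg Prod.snd h
        simp [hφ, hred, AddMonoidHom.prodMap] at h1 h2
        exact ⟨fun i => congrFun h1 i, h2⟩
      have hdvd : ∀ i, (m : ℤ) ∣ (e a).1 i := fun i =>
        (ZMod.intCast_zmod_eq_zero_iff_dvd _ _).mp (h1.1 i)
      refine ⟨(e a).1.mapRange (fun t => t / (m : ℤ)) (by simp), ?_⟩
      refine Prod.ext ?_ h1.2
      ext i
      simp only [Finsupp.smul_apply, Finsupp.mapRange_apply, smul_eq_mul]
      exact (Int.mul_ediv_cancel' (hdvd i)).symm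
    · rintro ⟨v, hv⟩
      have : φ a = (red ((m : ℤ) • v), 0) := by
        simp [hφ, hv, AddMonoidHom.prodMap]
      rw [this]
      have : red ((m : ℤ) • v) = 0 := by
        funext i
        simp [hred, Finsupp.smul_apply]
      rw [this]; rfl
  -- the multiplicative version of φ and the subgroup R
  set φ' : Q →* Multiplicative ((Fin n → ZMod m) × T) :=
    { toFun := fun q => Multiplicative.ofAdd (φ (Additive.ofMul q))
      map_one' := by simp
      map_mul' := by intro a b; simp [← ofAdd_add] } with hφ'
  have hφ'1 : ∀ q : Q, φ' q = 1 ↔ φ (Additive.ofMul q) = 0 := by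
    intro q; constructor
    · intro h; simpa [hφ'] using h
    · intro h; simp [hφ', h]
  set R : Subgroup P := φ'.ker.comap π with hR
  have hmemR : ∀ x : P, x ∈ R ↔ φ (Additive.ofMul (π x)) = 0 := by
    intro x
    rw [hR, Subgroup.mem_comap, MonoidHom.mem_ker, hφ'1]
  -- R has finite index
  haveI : Finite ((Fin n → ZMod m) × T) := inferInstance
  haveI : Finite (Multiplicative ((Fin n → ZMod m) × T)) := inferInstance
  haveI hfk : φ'.ker.FiniteIndex := Subgroup.finiteIndex_ker φ'
  have hRfi : R.FiniteIndex := by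
    constructor
    rw [hR, Subgroup.index_comap_of_surjective _ hπ]
    exact hfk.index_ne_zero
  -- K ≤ R
  have hKR : K ≤ R := by
    intro x hx
    rw [hmemR, (hπ1 x).mpr hx]
    simp
  -- R avoids F
  have hFR : ∀ f ∈ F, f ∉ R := by
    intro f hf hfR
    rw [hmemR] at hfR
    obtain ⟨v, hv⟩ := (hker _).mp hfR
    by_cases hv0 : v = 0
    · rw [hv0, smul_zero] at hv
      have : Additive.ofMul (π f) = 0 := by
        have := congrArg e.symm hv
        simpa [Prod.mk_zero_zero] using this
      have : π f = 1 := this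
      exact hF f hf ((hπ1 f).mp this)
    · obtain ⟨i, hi⟩ : ∃ i, v i ≠ 0 := by
        by_contra h
        push_neg at h
        exact hv0 (Finsupp.ext h)
      have h1 : (e (Additive.ofMul (π f))).1 i = (m : ℤ) * v i := by
        rw [hv]; simp [Finsupp.smul_apply]
      have h2 := hmbig f hf i
      rw [h1] at h2
      have : m ≤ ((m : ℤ) * v i).natAbs := by
        rw [Int.natAbs_mul, Int.natAbs_natCast]
        have : 1 ≤ (v i).natAbs := Int.natAbs_pos.mpr hi
        calc m = m * 1 := (mul_one m).symm
          _ ≤ m * (v i).natAbs := Nat.mul_le_mul_left m this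
      omega
  -- the section
  set ψ : (Fin n →₀ ℤ) →+ Additive Q :=
    { toFun := fun v => e.symm ((m : ℤ) • v, 0)
      map_zero' := by simp
      map_add' := by
        intro v w
        show e.symm ((m : ℤ) • (v + w), 0) =
          e.symm ((m : ℤ) • v, 0) + e.symm ((m : ℤ) • w, 0)
        rw [← map_add, Prod.mk_add_mk, add_zero, smul_add] } with hψ
  choose g hg using fun i : Fin n => hπ (Additive.toMul (ψ (Finsupp.single i 1)))
  set s : (Fin n →₀ ℤ) →+ Additive P :=
    Finsupp.liftAddHom (fun i => (zmultiplesHom (Additive P)) (Additive.ofMul (g i))) with hs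
  have hsec : (MonoidHom.toAdditive π).comp s = ψ := by
    apply Finsupp.addHom_ext
    intro i k
    have h1 : s (Finsupp.single i k) = k • Additive.ofMul (g i) := by
      rw [hs, Finsupp.liftAddHom_apply_single]
      rfl
    have h2 : (MonoidHom.toAdditive π) (Additive.ofMul (g i)) = ψ (Finsupp.single i 1) := by
      show Additive.ofMul (π (g i)) = ψ (Finsupp.single i 1)
      rw [hg i]
      rfl
    show (MonoidHom.toAdditive π) (s (Finsupp.single i k)) = ψ (Finsupp.single i k)
    rw [h1, map_zsmul, h2, ← map_zsmul ψ, Finsupp.smul_single, smul_eq_mul, mul_one]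
  have hsv : ∀ v : Fin n →₀ ℤ, π (Additive.toMul (s v)) = Additive.toMul (ψ v) := by
    intro v
    have := DFunLike.congr_fun hsec v
    exact congrArg Additive.toMul this
  -- the complement L
  set L : Subgroup P :=
    { carrier := Set.range (fun v : Fin n →₀ ℤ => Additive.toMul (s v))
      one_mem' := ⟨0, by simp⟩
      mul_mem' := by
        rintro a b ⟨v, hv⟩ ⟨w, hw⟩
        refine ⟨v + w, ?_⟩
        show Additive.toMul (s (v + w)) = a * b
        rw [map_add]
        simp only at hv hw
        rw [← hv, ← hw]
        rfl
      inv_mem' := by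
        rintro a ⟨v, hv⟩
        refine ⟨-v, ?_⟩
        show Additive.toMul (s (-v)) = a⁻¹
        rw [map_neg]
        simp only at hv
        rw [← hv]
        rfl } with hL
  have hmemL : ∀ x : P, x ∈ L ↔ ∃ v, Additive.toMul (s v) = x := fun x => Iff.rfl
  have hψker : ∀ v : Fin n →₀ ℤ, φ (ψ v) = 0 := by
    intro v
    apply (hker _).mpr
    exact ⟨v, by simp [hψ]⟩
  have hLR : L ≤ R := by
    intro x hx
    obtain ⟨v, hv⟩ := (hmemL x).mp hx
    rw [hmemR, ← hv, hsv v]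
    simpa using hψker v
  refine ⟨R, hRfi, hKR, hFR, L, hLR, ?_, ?_⟩
  · -- K ⊓ L = ⊥
    rw [eq_bot_iff]
    rintro x ⟨hxK, hxL⟩
    obtain ⟨v, hv⟩ := (hmemL x).mp hxL
    have h1 : π x = 1 := (hπ1 x).mpr hxK
    rw [← hv, hsv v] at h1
    have h2 : ψ v = 0 := h1
    have h3 : ((m : ℤ) • v, (0 : T)) = 0 := by
      have := congrArg e h2
      simpa [hψ] using this
    have h4 : (m : ℤ) • v = 0 := congrArg Prod.fst h3
    have h5 : v = 0 := by
      rcases smul_eq_zero.mp h4 with h | h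
      · exact absurd h (by exact_mod_cast NeZero.ne m)
      · exact h
    rw [h5] at hv
    simp at hv
    simp [← hv, Subgroup.mem_bot]
  · -- K ⊔ L = R
    apply le_antisymm
    · exact sup_le hKR hLR
    · intro x hx
      obtain ⟨v, hv⟩ := (hker _).mp ((hmemR x).mp hx)
      have h1 : Additive.ofMul (π x) = ψ v := by
        rw [hψ]
        show Additive.ofMul (π x) = e.symm ((m : ℤ) • v, 0)
        rw [← hv]
        simp
      set y : P := Additive.toMul (s v) with hy
      have hyL : y ∈ L := ⟨v, rfl⟩
      have h2 : π x = π y := by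
        rw [hy, hsv v]
        exact congrArg Additive.toMul h1
      have h3 : x * y⁻¹ ∈ K := by
        rw [← hπ1, map_mul, map_inv, h2, mul_inv_cancel]
      have : x = (x * y⁻¹) * y := by group
      rw [this]
      exact mul_mem (Subgroup.mem_sup_left h3) (Subgroup.mem_sup_right hyL)
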